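/- Fix a measurable utility function u : 𝒳 → ℝ with u(X) integrable and a budget b with 0 < b < 1. A feasible decision policy d maximizes u(d) = E[d(X)·u(X)] over all feasible policies if and only if d is a budget-exhausting threshold policy, i.e., there exists t ∈ [-∞,∞] such that almost surely d(X) = 1 when u(X) > t and d(X) = 0 when u(X) < t, and min(b, Pr(u(X) > 0)) ≤ E[d(X)] ≤ min(b, Pr(u(X) ≥ 0)). Moreover, at least one utility-maximizing feasible policy exists. -/

import Mathlib

open MeasureTheory

open Set Filter Topology

section Helpers

variable {Ω : Type*} [MeasurableSpace Ω] (P : Measure Ω) [IsProbabilityMeasure P]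

lemma pol_integrable {g : Ω → ℝ} (hg : Measurable g) (h01 : ∀ ω, g ω ∈ Set.Icc (0:ℝ) 1) :
    Integrable g P := by
  refine (integrable_const (1:ℝ)).mono' hg.aestronglyMeasurable (ae_of_all _ fun ω => ?_)
  have := h01 ω
  rw [Real.norm_eq_abs, abs_le]
  constructor <;> linarith [this.1, this.2]

lemma pol_mul_integrable {g f : Ω → ℝ} (hg : Measurable g) (h01 : ∀ ω, g ω ∈ Set.Icc (0:ℝ) 1)
    (hf : Measurable f) (hfi : Integrable f P) :
    Integrable (fun ω => g ω * f ω) P := by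
  refine hfi.norm.mono' (hg.mul hf).aestronglyMeasurable (ae_of_all _ fun ω => ?_)
  have := h01 ω
  rw [Real.norm_eq_abs, abs_mul, Real.norm_eq_abs]
  nlinarith [abs_nonneg (f ω), abs_of_nonneg this.1, this.1, this.2]


lemma expand_int {f : Ω → ℝ} (hf : Measurable f) (hfi : Integrable f P) (t : ℝ)
    {g g' : Ω → ℝ} (hg : Measurable g) (hg01 : ∀ ω, g ω ∈ Set.Icc (0:ℝ) 1)
    (hg' : Measurable g') (hg'01 : ∀ ω, g' ω ∈ Set.Icc (0:ℝ) 1) :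
    ∫ ω, (g ω - g' ω) * (f ω - t) ∂P
      = (∫ ω, g ω * f ω ∂P - ∫ ω, g' ω * f ω ∂P)
        - t * (∫ ω, g ω ∂P - ∫ ω, g' ω ∂P) := by
  have hgi := pol_integrable P hg hg01
  have hg'i := pol_integrable P hg' hg'01
  have hgf := pol_mul_integrable P hg hg01 hf hfi
  have hg'f := pol_mul_integrable P hg' hg'01 hf hfi
  have e : ∀ ω, (g ω - g' ω) * (f ω - t)
      = (g ω * f ω - g' ω * f ω) - (t * g ω - t * g' ω) := by intro ω; ring
  have i1 : Integrable (fun ω => g ω * f ω - g' ω * f ω) P := hgf.sub hg'f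
  have i2 : Integrable (fun ω => t * g ω - t * g' ω) P :=
    (hgi.const_mul t).sub (hg'i.const_mul t)
  rw [integral_congr_ae (ae_of_all _ e), integral_sub i1 i2,
    integral_sub hgf hg'f, integral_sub (hgi.const_mul t) (hg'i.const_mul t),
    integral_const_mul, integral_const_mul]
  ring

lemma int_prod_integrable {f : Ω → ℝ} (hf : Measurable f) (hfi : Integrable f P) (t : ℝ)
    {g g' : Ω → ℝ} (hg : Measurable g) (hg01 : ∀ ω, g ω ∈ Set.Icc (0:ℝ) 1)
    (hg' : Measurable g') (hg'01 : ∀ ω, g' ω ∈ Set.Icc (0:ℝ) 1) :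
    Integrable (fun ω => (g ω - g' ω) * (f ω - t)) P := by
  have hgi := pol_integrable P hg hg01
  have hg'i := pol_integrable P hg' hg'01
  have hgf := pol_mul_integrable P hg hg01 hf hfi
  have hg'f := pol_mul_integrable P hg' hg'01 hf hfi
  have i1 : Integrable (fun ω => g ω * f ω - g' ω * f ω) P := hgf.sub hg'f
  have i2 : Integrable (fun ω => t * g ω - t * g' ω) P :=
    (hgi.const_mul t).sub (hg'i.const_mul t)
  refine (i1.sub i2).congr (ae_of_all _ fun ω => ?_)
  show (g ω * f ω - g' ω * f ω) - (t * g ω - t * g' ω) = (g ω - g' ω) * (f ω - t)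
  ring

/-- Core optimality lemma: a threshold policy at a nonnegative real threshold `t`
which either has `t = 0` or exhausts the budget dominates every feasible policy. -/
lemma core_opt {f : Ω → ℝ} (hf : Measurable f) (hfi : Integrable f P)
    {b t : ℝ} (ht : 0 ≤ t)
    {g g' : Ω → ℝ} (hg : Measurable g) (hg01 : ∀ ω, g ω ∈ Set.Icc (0:ℝ) 1)
    (hg' : Measurable g') (hg'01 : ∀ ω, g' ω ∈ Set.Icc (0:ℝ) 1)
    (hthr : ∀ᵐ ω ∂P, (t < f ω → g ω = 1) ∧ (f ω < t → g ω = 0))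
    (hmass : t = 0 ∨ ∫ ω, g ω ∂P = b)
    (hg'b : ∫ ω, g' ω ∂P ≤ b) :
    ∫ ω, g' ω * f ω ∂P ≤ ∫ ω, g ω * f ω ∂P := by
  have hgi := pol_integrable P hg hg01
  have hg'i := pol_integrable P hg' hg'01
  have hgf := pol_mul_integrable P hg hg01 hf hfi
  have hg'f := pol_mul_integrable P hg' hg'01 hf hfi
  have key : 0 ≤ ∫ ω, (g ω - g' ω) * (f ω - t) ∂P := by
    refine integral_nonneg_of_ae (hthr.mono fun ω hω => ?_)
    show (0:ℝ) ≤ (g ω - g' ω) * (f ω - t)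
    rcases lt_trichotomy (f ω) t with h | h | h
    · have h0 := hω.2 h
      have := (hg'01 ω).1
      have := (hg'01 ω).2
      nlinarith
    · simp [h]
    · have h1 := hω.1 h
      have := (hg'01 ω).1
      have := (hg'01 ω).2
      nlinarith
  have expand := expand_int P hf hfi t hg hg01 hg' hg'01
  rcases hmass with h0 | hB
  · rw [expand, h0] at key; linarith
  · rw [expand, hB] at key
    nlinarith [mul_nonneg ht (sub_nonneg.2 hg'b)]

end Helpers

section Helpers2
set_option linter.unusedSectionVars false

variable {Ω : Type*} [MeasurableSpace Ω] (P : Measure Ω) [IsProbabilityMeasure P]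
variable {g : Ω → ℝ} {A : Set Ω}

lemma int_on_le (hg : Measurable g) (h01 : ∀ ω, g ω ∈ Set.Icc (0:ℝ) 1)
    (hA : MeasurableSet A) : ∫ ω in A, g ω ∂P ≤ (P A).toReal := by
  have : ∫ ω in A, g ω ∂P ≤ ∫ _ω in A, (1:ℝ) ∂P := by
    refine setIntegral_mono_on ((pol_integrable P hg h01).integrableOn)
      (integrableOn_const (measure_ne_top P A)) hA fun ω _ => (h01 ω).2
  simpa [setIntegral_const, measureReal_def] using this

lemma int_on_nonneg (h01 : ∀ ω, g ω ∈ Set.Icc (0:ℝ) 1) :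
    0 ≤ ∫ ω in A, g ω ∂P :=
  setIntegral_nonneg_of_ae (ae_of_all _ fun ω => (h01 ω).1)

lemma int_on_eq_one (hg : Measurable g) (hA : MeasurableSet A)
    (h : ∀ᵐ ω ∂P, ω ∈ A → g ω = 1) : ∫ ω in A, g ω ∂P = (P A).toReal := by
  rw [setIntegral_congr_ae hA h]
  simp [setIntegral_const, measureReal_def]

lemma int_on_zero_of_ae (hg : Measurable g) (hA : MeasurableSet A)
    (h : ∀ᵐ ω ∂P, ω ∈ A → g ω = 0) : ∫ ω in A, g ω ∂P = 0 := by
  rw [setIntegral_congr_ae hA h]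
  simp

lemma ae_zero_of_int_zero (hg : Measurable g) (h01 : ∀ ω, g ω ∈ Set.Icc (0:ℝ) 1)
    (hA : MeasurableSet A) (hz : ∫ ω in A, g ω ∂P = 0) :
    ∀ᵐ ω ∂P, ω ∈ A → g ω = 0 := by
  have hnn : 0 ≤ᵐ[P.restrict A] g := ae_of_all _ fun ω => (h01 ω).1
  have := (setIntegral_eq_zero_iff_of_nonneg_ae hnn
    ((pol_integrable P hg h01).integrableOn)).1 hz
  exact (ae_restrict_iff' hA).1 this

lemma ae_one_of_int_eq (hg : Measurable g) (h01 : ∀ ω, g ω ∈ Set.Icc (0:ℝ) 1)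
    (hA : MeasurableSet A) (he : ∫ ω in A, g ω ∂P = (P A).toReal) :
    ∀ᵐ ω ∂P, ω ∈ A → g ω = 1 := by
  have h01' : ∀ ω, (1 - g ω) ∈ Set.Icc (0:ℝ) 1 := fun ω =>
    ⟨by linarith [(h01 ω).2], by linarith [(h01 ω).1]⟩
  have hm : Measurable fun ω => 1 - g ω := (measurable_const.sub hg)
  have hz : ∫ ω in A, (1 - g ω) ∂P = 0 := by
    rw [integral_sub (integrableOn_const (C := (1:ℝ)) (measure_ne_top P A))
      ((pol_integrable P hg h01).integrableOn), he]
    simp [setIntegral_const, measureReal_def]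
  have := ae_zero_of_int_zero P hm h01' hA hz
  exact this.mono fun ω h hm => by linarith [h hm]

lemma split_compl (hg : Measurable g) (h01 : ∀ ω, g ω ∈ Set.Icc (0:ℝ) 1)
    (hA : MeasurableSet A) :
    ∫ ω, g ω ∂P = ∫ ω in A, g ω ∂P + ∫ ω in Aᶜ, g ω ∂P :=
  (integral_add_compl hA (pol_integrable P hg h01)).symm

lemma toReal_mono_meas {B : Set Ω} (h : A ⊆ B) : (P A).toReal ≤ (P B).toReal :=
  ENNReal.toReal_mono (measure_ne_top P B) (measure_mono h)

end Helpers2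

section Quantile
set_option linter.unusedSectionVars false

variable {Ω : Type*} [MeasurableSpace Ω] (P : Measure Ω) [IsProbabilityMeasure P]

lemma exists_quantile {f : Ω → ℝ} (hf : Measurable f) {b : ℝ} (hb0 : 0 < b) (hb1 : b < 1) :
    ∃ t : ℝ, (P {ω | t < f ω}).toReal ≤ b ∧ b ≤ (P {ω | t ≤ f ω}).toReal := by
  classical
  set S : Set ℝ := {t : ℝ | (P {ω | t < f ω}).toReal ≤ b} with hS
  -- S is upward closed
  have hup : ∀ t ∈ S, ∀ s, t ≤ s → s ∈ S := by
    intro t ht s hts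
    exact le_trans (toReal_mono_meas P fun ω (h : s < f ω) => lt_of_le_of_lt hts h) ht
  -- S is nonempty
  have hne : S.Nonempty := by
    have h1 : Tendsto (fun n : ℕ => P {ω | (n : ℝ) < f ω}) atTop
        (𝓝 (P (⋂ n : ℕ, {ω | (n : ℝ) < f ω}))) := by
      refine tendsto_measure_iInter_atTop
        (fun n => (hf measurableSet_Ioi).nullMeasurableSet) ?_ ⟨0, measure_ne_top _ _⟩
      intro n m hnm ω (h : (m:ℝ) < f ω)
      exact lt_of_le_of_lt (by exact_mod_cast Nat.cast_le.2 hnm) h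
    have h2 : (⋂ n : ℕ, {ω | (n : ℝ) < f ω}) = ∅ := by
      ext ω
      simp only [Set.mem_iInter, Set.mem_setOf_eq, Set.mem_empty_iff_false, iff_false, not_forall,
        not_lt]
      obtain ⟨n, hn⟩ := exists_nat_gt (f ω)
      exact ⟨n, hn.le⟩
    rw [h2, measure_empty] at h1
    have h3 : ∀ᶠ n : ℕ in atTop, P {ω | (n : ℝ) < f ω} < ENNReal.ofReal b :=
      h1.eventually_lt_const (by simpa using hb0)
    obtain ⟨n, hn⟩ := h3.exists
    exact ⟨n, ENNReal.toReal_le_of_le_ofReal hb0.le hn.le⟩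
  -- S is bounded below
  have hbdd : BddBelow S := by
    have h1 : Tendsto (fun n : ℕ => P {ω | (-(n : ℝ)) < f ω}) atTop
        (𝓝 (P (⋃ n : ℕ, {ω | (-(n : ℝ)) < f ω}))) := by
      refine tendsto_measure_iUnion_atTop ?_
      intro n m hnm ω (h : (-(n:ℝ)) < f ω)
      refine lt_of_le_of_lt ?_ h
      simp only [neg_le_neg_iff]
      exact_mod_cast hnm
    have h2 : (⋃ n : ℕ, {ω | (-(n : ℝ)) < f ω}) = Set.univ := by
      ext ω
      simp only [Set.mem_iUnion, Set.mem_setOf_eq, Set.mem_univ, iff_true]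
      obtain ⟨n, hn⟩ := exists_nat_gt (-(f ω))
      exact ⟨n, by linarith⟩
    rw [h2, measure_univ] at h1
    have h3 : ∀ᶠ n : ℕ in atTop, ENNReal.ofReal b < P {ω | (-(n : ℝ)) < f ω} :=
      h1.eventually_const_lt (by exact_mod_cast ENNReal.ofReal_lt_one.2 hb1)
    obtain ⟨n, hn⟩ := h3.exists
    refine ⟨-(n:ℝ), fun t ht => ?_⟩
    by_contra hlt
    push_neg at hlt
    have : b < (P {ω | t < f ω}).toReal := by
      have hle : ENNReal.ofReal b < P {ω | t < f ω} :=
        lt_of_lt_of_le hn (measure_mono fun ω (h : -(n:ℝ) < f ω) => lt_trans hlt h)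
      exact (ENNReal.ofReal_lt_iff_lt_toReal hb0.le (measure_ne_top _ _)).1 hle
    exact absurd ht (by simp only [hS, Set.mem_setOf_eq]; linarith)
  set t := sInf S with htdef
  refine ⟨t, ?_, ?_⟩
  · -- right continuity: P {f > t} ≤ b
    have hsub : {ω | t < f ω} = ⋃ n : ℕ, {ω | t + 1/(n+1 : ℝ) < f ω} := by
      ext ω
      simp only [Set.mem_setOf_eq, Set.mem_iUnion]
      constructor
      · intro h
        obtain ⟨n, hn⟩ := exists_nat_one_div_lt (sub_pos.2 h)
        exact ⟨n, by push_cast at hn ⊢; linarith⟩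
      · rintro ⟨n, hn⟩
        have : (0:ℝ) < 1/(n+1:ℝ) := by positivity
        linarith
    have hmono : Monotone fun n : ℕ => {ω | t + 1/(n+1 : ℝ) < f ω} := by
      intro n m hnm ω (h : t + 1/(n+1:ℝ) < f ω)
      have : 1/(m+1:ℝ) ≤ 1/(n+1:ℝ) := by
        apply one_div_le_one_div_of_le (by positivity)
        exact_mod_cast by exact_mod_cast Nat.succ_le_succ hnm
      show t + 1/(m+1:ℝ) < f ω
      linarith
    have h1 : Tendsto (fun n : ℕ => P {ω | t + 1/(n+1 : ℝ) < f ω}) atTop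
        (𝓝 (P {ω | t < f ω})) := by
      rw [hsub]; exact tendsto_measure_iUnion_atTop hmono
    have h2 : ∀ n : ℕ, P {ω | t + 1/(n+1 : ℝ) < f ω} ≤ ENNReal.ofReal b := by
      intro n
      have hmem : t + 1/(n+1:ℝ) ∈ S := by
        have ht' : t < t + 1/(n+1:ℝ) := by
          have : (0:ℝ) < 1/(n+1:ℝ) := by positivity
          linarith
        obtain ⟨s, hsS, hst⟩ := exists_lt_of_csInf_lt hne ht'
        exact hup s hsS _ hst.le
      exact ENNReal.le_ofReal_iff_toReal_le (measure_ne_top _ _) hb0.le |>.2 hmem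
    have h3 : P {ω | t < f ω} ≤ ENNReal.ofReal b := le_of_tendsto h1 (Filter.Eventually.of_forall h2)
    exact ENNReal.toReal_le_of_le_ofReal hb0.le h3
  · -- left limit: b ≤ P {f ≥ t}
    have hsub : {ω | t ≤ f ω} = ⋂ n : ℕ, {ω | t - 1/(n+1 : ℝ) < f ω} := by
      ext ω
      simp only [Set.mem_setOf_eq, Set.mem_iInter]
      constructor
      · intro h n
        have : (0:ℝ) < 1/(n+1:ℝ) := by positivity
        linarith
      · intro h
        by_contra hlt
        push_neg at hlt
        obtain ⟨n, hn⟩ := exists_nat_one_div_lt (sub_pos.2 hlt)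
        have := h n
        push_cast at hn this ⊢
        linarith
    have hanti : Antitone fun n : ℕ => {ω | t - 1/(n+1 : ℝ) < f ω} := by
      intro n m hnm ω (h : t - 1/(m+1:ℝ) < f ω)
      have : 1/(m+1:ℝ) ≤ 1/(n+1:ℝ) := by
        apply one_div_le_one_div_of_le (by positivity)
        exact_mod_cast by exact_mod_cast Nat.succ_le_succ hnm
      show t - 1/(n+1:ℝ) < f ω
      linarith
    have h1 : Tendsto (fun n : ℕ => P {ω | t - 1/(n+1 : ℝ) < f ω}) atTop
        (𝓝 (P {ω | t ≤ f ω})) := by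
      rw [hsub]
      exact tendsto_measure_iInter_atTop
        (fun n => (hf measurableSet_Ioi).nullMeasurableSet) hanti ⟨0, measure_ne_top _ _⟩
    have h2 : ∀ n : ℕ, ENNReal.ofReal b ≤ P {ω | t - 1/(n+1 : ℝ) < f ω} := by
      intro n
      have hnm : t - 1/(n+1:ℝ) ∉ S := by
        intro hmem
        have := csInf_le hbdd hmem
        have hpos : (0:ℝ) < 1/(n+1:ℝ) := by positivity
        rw [← htdef] at this
        linarith
      have : b < (P {ω | t - 1/(n+1:ℝ) < f ω}).toReal := by
        by_contra hc
        push_neg at hc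
        exact hnm hc
      exact le_of_lt ((ENNReal.ofReal_lt_iff_lt_toReal hb0.le (measure_ne_top _ _)).2 this)
    have h3 : ENNReal.ofReal b ≤ P {ω | t ≤ f ω} :=
      ge_of_tendsto h1 (Filter.Eventually.of_forall h2)
    exact (ENNReal.ofReal_le_iff_le_toReal (measure_ne_top _ _)).1 h3

end Quantile

open MeasureTheory

set_option maxHeartbeats 1000000 in
/-- A feasible policy is utility maximizing iff it is a budget-exhausting
threshold policy; moreover a utility-maximizing feasible policy exists. -/
theorem utility_maximizing_iff_budget_exhausting_threshold
    {Ω 𝒳 : Type*} [MeasurableSpace Ω] [MeasurableSpace 𝒳]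
    (P : Measure Ω) [IsProbabilityMeasure P]
    (X : Ω → 𝒳) (hX : Measurable X)
    (u : 𝒳 → ℝ) (hu : Measurable u) (hint : Integrable (fun ω => u (X ω)) P)
    (b : ℝ) (hb0 : 0 < b) (hb1 : b < 1)
    (d : 𝒳 → ℝ) (hd : Measurable d) (hd01 : ∀ x, d x ∈ Set.Icc (0 : ℝ) 1)
    (hfeas : ∫ ω, d (X ω) ∂P ≤ b) :
    -- `d` maximizes utility among feasible policies iff it is a budget-exhausting
    -- threshold policy
    ((∀ d' : 𝒳 → ℝ, Measurable d' → (∀ x, d' x ∈ Set.Icc (0 : ℝ) 1) →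
        (∫ ω, d' (X ω) ∂P ≤ b) →
        ∫ ω, d' (X ω) * u (X ω) ∂P ≤ ∫ ω, d (X ω) * u (X ω) ∂P) ↔
      (∃ t : EReal,
        (∀ᵐ ω ∂P, (t < (u (X ω) : EReal) → d (X ω) = 1) ∧
                  ((u (X ω) : EReal) < t → d (X ω) = 0)) ∧
        min b (P {ω | 0 < u (X ω)}).toReal ≤ ∫ ω, d (X ω) ∂P ∧
        ∫ ω, d (X ω) ∂P ≤ min b (P {ω | 0 ≤ u (X ω)}).toReal)) ∧
    -- moreover, a utility-maximizing feasible policy exists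
    (∃ d₀ : 𝒳 → ℝ, Measurable d₀ ∧ (∀ x, d₀ x ∈ Set.Icc (0 : ℝ) 1) ∧
      (∫ ω, d₀ (X ω) ∂P ≤ b) ∧
      ∀ d' : 𝒳 → ℝ, Measurable d' → (∀ x, d' x ∈ Set.Icc (0 : ℝ) 1) →
        (∫ ω, d' (X ω) ∂P ≤ b) →
        ∫ ω, d' (X ω) * u (X ω) ∂P ≤ ∫ ω, d₀ (X ω) * u (X ω) ∂P) := by
  classical
  set f : Ω → ℝ := fun ω => u (X ω) with hfdef
  have hfm : Measurable f := hu.comp hX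
  have hg : Measurable fun ω => d (X ω) := hd.comp hX
  have hg01 : ∀ ω, d (X ω) ∈ Set.Icc (0:ℝ) 1 := fun ω => hd01 (X ω)
  -- quantile
  obtain ⟨ts, htsA, htsB⟩ := exists_quantile P hfm hb0 hb1
  set t₀ : ℝ := max ts 0 with ht₀def
  have ht₀0 : 0 ≤ t₀ := le_max_right _ _
  have hGt₀ : (P {ω | t₀ < f ω}).toReal ≤ b :=
    le_trans (toReal_mono_meas P fun ω (h : t₀ < f ω) =>
      lt_of_le_of_lt (le_max_left _ _) h) htsA
  have hpos : 0 < t₀ → b ≤ (P {ω | t₀ ≤ f ω}).toReal := by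
    intro h
    have hts : t₀ = ts := by
      rcases max_cases ts 0 with ⟨h1, _⟩ | ⟨h1, h2⟩
      · exact h1
      · rw [ht₀def] at h; rw [h1] at h; exact absurd h (lt_irrefl 0)
    rw [hts]; exact htsB
  -- construction of d₀
  set p : ℝ := (P {ω | t₀ < f ω}).toReal with hpdef
  set q : ℝ := (P {ω | f ω = t₀}).toReal with hqdef
  set m : ℝ := min b (P {ω | t₀ ≤ f ω}).toReal with hmdef
  set θ : ℝ := if q = 0 then 0 else (m - p)/q with hθdef
  set d₀ : 𝒳 → ℝ := fun x => if t₀ < u x then 1 else if u x = t₀ then θ else 0 with hd₀def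
  have hsplit : (P {ω | t₀ ≤ f ω}).toReal = p + q := by
    have hdis : Disjoint {ω | t₀ < f ω} {ω | f ω = t₀} := by
      rw [Set.disjoint_left]
      intro ω (h1 : t₀ < f ω) (h2 : f ω = t₀)
      rw [h2] at h1; exact lt_irrefl _ h1
    have hun : {ω | t₀ ≤ f ω} = {ω | t₀ < f ω} ∪ {ω | f ω = t₀} := by
      ext ω
      simp only [Set.mem_setOf_eq, Set.mem_union]
      constructor
      · intro h; rcases lt_or_eq_of_le h with h | h
        · exact Or.inl h
        · exact Or.inr h.symm
      · rintro (h | h); exacts [h.le, h.ge]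
    rw [hun, measure_union hdis (hfm (measurableSet_singleton t₀)),
      ENNReal.toReal_add (measure_ne_top _ _) (measure_ne_top _ _)]
  have hq0 : 0 ≤ q := ENNReal.toReal_nonneg
  have hp0 : 0 ≤ p := ENNReal.toReal_nonneg
  have hpm : p ≤ m := by
    refine le_min hGt₀ (toReal_mono_meas P fun ω (h : t₀ < f ω) => h.le)
  have hmpq : m ≤ p + q := by rw [← hsplit]; exact min_le_right _ _
  have hθ01 : θ ∈ Set.Icc (0:ℝ) 1 := by
    rw [hθdef]
    split_ifs with h
    · exact ⟨le_refl 0, zero_le_one⟩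
    · have hq : 0 < q := lt_of_le_of_ne hq0 (Ne.symm h)
      constructor
      · exact div_nonneg (by linarith) hq.le
      · rw [div_le_one hq]; linarith
  have hd₀m : Measurable d₀ := by
    refine Measurable.ite (hu measurableSet_Ioi) measurable_const ?_
    exact Measurable.ite (hu (measurableSet_singleton t₀)) measurable_const measurable_const
  have hd₀01 : ∀ x, d₀ x ∈ Set.Icc (0:ℝ) 1 := by
    intro x
    rw [hd₀def]
    simp only
    split_ifs
    · exact ⟨zero_le_one, le_refl 1⟩
    · exact hθ01
    · exact ⟨le_refl 0, zero_le_one⟩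
  have hg₀ : Measurable fun ω => d₀ (X ω) := hd₀m.comp hX
  have hg₀01 : ∀ ω, d₀ (X ω) ∈ Set.Icc (0:ℝ) 1 := fun ω => hd₀01 (X ω)
  have hd₀thr : ∀ ω, (t₀ < f ω → d₀ (X ω) = 1) ∧ (f ω < t₀ → d₀ (X ω) = 0) := by
    intro ω
    constructor
    · intro h; rw [hd₀def]; exact if_pos h
    · intro h
      rw [hd₀def]
      simp only
      rw [if_neg (by exact fun h' => absurd h (not_lt.2 h'.le)),
        if_neg (by
          intro h'
          have he : f ω = t₀ := h'
          rw [he] at h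
          exact lt_irrefl _ h)]
  have hd₀mass : ∫ ω, d₀ (X ω) ∂P = m := by
    have hA : MeasurableSet {ω | t₀ < f ω} := hfm measurableSet_Ioi
    have hB : MeasurableSet {ω | f ω = t₀} := hfm (measurableSet_singleton t₀)
    have hC : MeasurableSet {ω | f ω < t₀} := hfm measurableSet_Iio
    have e0 : ∫ ω, d₀ (X ω) ∂P
        = ∫ ω in {ω | t₀ < f ω}, d₀ (X ω) ∂P + ∫ ω in {ω | t₀ < f ω}ᶜ, d₀ (X ω) ∂P :=
      split_compl P hg₀ hg₀01 hA
    have e1 : ∫ ω in {ω | t₀ < f ω}, d₀ (X ω) ∂P = p :=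
      int_on_eq_one P hg₀ hA (ae_of_all _ fun ω h => (hd₀thr ω).1 h)
    have hcompl : {ω | t₀ < f ω}ᶜ = {ω | f ω = t₀} ∪ {ω | f ω < t₀} := by
      ext ω
      simp only [Set.mem_compl_iff, Set.mem_setOf_eq, Set.mem_union, not_lt]
      constructor
      · intro h; rcases eq_or_lt_of_le h with h | h
        · exact Or.inl h
        · exact Or.inr h
      · rintro (h | h); exacts [h.le, h.le]
    have hdisj : Disjoint {ω | f ω = t₀} {ω | f ω < t₀} := by
      rw [Set.disjoint_left]
      intro ω (h1 : f ω = t₀) (h2 : f ω < t₀)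
      rw [h1] at h2; exact lt_irrefl _ h2
    have e2 : ∫ ω in {ω | t₀ < f ω}ᶜ, d₀ (X ω) ∂P
        = ∫ ω in {ω | f ω = t₀}, d₀ (X ω) ∂P + ∫ ω in {ω | f ω < t₀}, d₀ (X ω) ∂P := by
      rw [hcompl]
      exact setIntegral_union hdisj hC
        ((pol_integrable P hg₀ hg₀01).integrableOn)
        ((pol_integrable P hg₀ hg₀01).integrableOn)
    have e3 : ∫ ω in {ω | f ω = t₀}, d₀ (X ω) ∂P = q * θ := by
      have heq : Set.EqOn (fun ω => d₀ (X ω)) (fun _ => θ) {ω | f ω = t₀} := by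
        intro ω h
        have h' : u (X ω) = t₀ := h
        show d₀ (X ω) = θ
        rw [hd₀def]
        simp only
        rw [if_neg (by rw [h']; exact lt_irrefl _), if_pos h']
      rw [setIntegral_congr_fun hB heq, setIntegral_const, smul_eq_mul, measureReal_def]
    have e4 : ∫ ω in {ω | f ω < t₀}, d₀ (X ω) ∂P = 0 :=
      int_on_zero_of_ae P hg₀ hC (ae_of_all _ fun ω h => (hd₀thr ω).2 h)
    rw [e0, e1, e2, e3, e4, add_zero]
    by_cases hq : q = 0
    · rw [hq] at hmpq ⊢
      rw [zero_mul, add_zero]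
      linarith
    · rw [hθdef, if_neg hq]
      field_simp
      ring
  have hmb : m ≤ b := min_le_left _ _
  have hd₀massor : t₀ = 0 ∨ ∫ ω, d₀ (X ω) ∂P = b := by
    rcases eq_or_lt_of_le ht₀0 with h | h
    · exact Or.inl h.symm
    · refine Or.inr ?_
      rw [hd₀mass, hmdef]
      exact min_eq_left (hpos h)
  have hd₀feas : ∫ ω, d₀ (X ω) ∂P ≤ b := by rw [hd₀mass]; exact hmb
  -- optimality of d₀
  have hd₀opt : ∀ d' : 𝒳 → ℝ, Measurable d' → (∀ x, d' x ∈ Set.Icc (0 : ℝ) 1) →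
      (∫ ω, d' (X ω) ∂P ≤ b) →
      ∫ ω, d' (X ω) * u (X ω) ∂P ≤ ∫ ω, d₀ (X ω) * u (X ω) ∂P := by
    intro d' hd' hd'01 hd'b
    exact core_opt P hfm hint ht₀0 hg₀ hg₀01 (hd'.comp hX) (fun ω => hd'01 (X ω))
      (ae_of_all _ hd₀thr) hd₀massor hd'b
  refine ⟨⟨?_, ?_⟩, d₀, hd₀m, hd₀01, hd₀feas, hd₀opt⟩
  · -- forward: optimal → threshold
    intro hopt
    have hle1 := hopt d₀ hd₀m hd₀01 hd₀feas
    have hle2 := hd₀opt d hd hd01 hfeas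
    have heq : ∫ ω, d₀ (X ω) * u (X ω) ∂P = ∫ ω, d (X ω) * u (X ω) ∂P :=
      le_antisymm hle1 hle2
    have hkey : ∫ ω, (d₀ (X ω) - d (X ω)) * (u (X ω) - t₀) ∂P
        = (∫ ω, d₀ (X ω) * u (X ω) ∂P - ∫ ω, d (X ω) * u (X ω) ∂P)
          - t₀ * (∫ ω, d₀ (X ω) ∂P - ∫ ω, d (X ω) ∂P) :=
      expand_int P hfm hint t₀ hg₀ hg₀01 hg hg01
    have hptwise : ∀ ω, (0:ℝ) ≤ (d₀ (X ω) - d (X ω)) * (u (X ω) - t₀) := by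
      intro ω
      rcases lt_trichotomy (u (X ω)) t₀ with h | h | h
      · have h0 := (hd₀thr ω).2 h
        nlinarith [(hg01 ω).1, (hg01 ω).2]
      · rw [h]; ring_nf; exact le_refl 0
      · have h1 := (hd₀thr ω).1 h
        nlinarith [(hg01 ω).1, (hg01 ω).2]
    have hA0 : 0 ≤ ∫ ω, (d₀ (X ω) - d (X ω)) * (u (X ω) - t₀) ∂P :=
      integral_nonneg_of_ae (ae_of_all _ hptwise)
    have hB0 : 0 ≤ t₀ * (m - ∫ ω, d (X ω) ∂P) := by
      rcases hd₀massor with h | h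
      · simp [h]
      · have hmb' : m = b := by rw [← hd₀mass, h]
        rw [hmb']
        exact mul_nonneg ht₀0 (by linarith)
    rw [heq, sub_self, hd₀mass] at hkey
    have hA_eq : ∫ ω, (d₀ (X ω) - d (X ω)) * (u (X ω) - t₀) ∂P = 0 := by linarith
    have hBz : t₀ * (m - ∫ ω, d (X ω) ∂P) = 0 := by linarith
    have hint0 : Integrable (fun ω => (d₀ (X ω) - d (X ω)) * (u (X ω) - t₀)) P :=
      int_prod_integrable P hfm hint t₀ hg₀ hg₀01 hg hg01
    have hae : ∀ᵐ ω ∂P, (d₀ (X ω) - d (X ω)) * (u (X ω) - t₀) = 0 := by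
      have hnn : 0 ≤ᵐ[P] fun ω => (d₀ (X ω) - d (X ω)) * (u (X ω) - t₀) :=
        ae_of_all _ hptwise
      have h := (integral_eq_zero_iff_of_nonneg_ae hnn hint0).1 hA_eq
      filter_upwards [h] with ω hω using hω
    have hdb : 0 < t₀ → ∫ ω, d (X ω) ∂P = b := by
      intro h0
      have hmb' : m = b := min_eq_left (hpos h0)
      rcases mul_eq_zero.1 hBz with h | h
      · exact absurd h (ne_of_gt h0)
      · rw [← hmb']; linarith
    have hthr' : ∀ᵐ ω ∂P, (t₀ < u (X ω) → d (X ω) = 1) ∧ (u (X ω) < t₀ → d (X ω) = 0) := by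
      refine hae.mono fun ω h => ⟨fun hlt => ?_, fun hlt => ?_⟩
      · have h1 := (hd₀thr ω).1 hlt
        have hne : u (X ω) - t₀ ≠ 0 := sub_ne_zero.2 (ne_of_gt hlt)
        rcases mul_eq_zero.1 h with h2 | h2
        · have h1' : d₀ (X ω) = 1 := h1
          rw [h1'] at h2; linarith
        · exact absurd h2 hne
      · have h1 := (hd₀thr ω).2 hlt
        have hne : u (X ω) - t₀ ≠ 0 := sub_ne_zero.2 (ne_of_lt hlt)
        rcases mul_eq_zero.1 h with h2 | h2
        · have h1' : d₀ (X ω) = 0 := h1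
          rw [h1'] at h2; linarith
        · exact absurd h2 hne
    have hU0 : MeasurableSet {ω | 0 < u (X ω)} := hfm measurableSet_Ioi
    have hU0' : MeasurableSet {ω | 0 ≤ u (X ω)} := hfm measurableSet_Ici
    refine ⟨(t₀ : EReal), ?_, ?_, ?_⟩
    · refine hthr'.mono fun ω h => ⟨fun hlt => ?_, fun hlt => ?_⟩
      · exact h.1 (EReal.coe_lt_coe_iff.1 hlt)
      · exact h.2 (EReal.coe_lt_coe_iff.1 hlt)
    · -- lower bound
      rcases eq_or_lt_of_le ht₀0 with h0 | h0
      · have haeone : ∀ᵐ ω ∂P, ω ∈ {ω | 0 < u (X ω)} → d (X ω) = 1 := by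
          refine hthr'.mono fun ω h hm => h.1 ?_
          rw [← h0]; exact hm
        have h1 : ∫ ω in {ω | 0 < u (X ω)}, d (X ω) ∂P = (P {ω | 0 < u (X ω)}).toReal :=
          int_on_eq_one P hg hU0 haeone
        have h2 := split_compl P hg hg01 hU0
        have h3 := int_on_nonneg P (A := {ω | 0 < u (X ω)}ᶜ) hg01
        refine le_trans (min_le_right _ _) ?_
        rw [h2, h1]
        linarith
      · rw [hdb h0]
        exact min_le_left _ _
    · -- upper bound
      refine le_min hfeas ?_
      rcases eq_or_lt_of_le ht₀0 with h0 | h0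
      · have haez : ∀ᵐ ω ∂P, ω ∈ {ω | 0 ≤ u (X ω)}ᶜ → d (X ω) = 0 := by
          refine hthr'.mono fun ω h hm => h.2 ?_
          have : ¬ (0:ℝ) ≤ u (X ω) := hm
          rw [← h0]; linarith
        have h1 : ∫ ω in {ω | 0 ≤ u (X ω)}ᶜ, d (X ω) ∂P = 0 :=
          int_on_zero_of_ae P hg hU0'.compl haez
        have h2 := split_compl P hg hg01 hU0'
        have h3 := int_on_le P hg hg01 hU0'
        rw [h2, h1]
        linarith
      · rw [hdb h0]
        refine le_trans (hpos h0) (toReal_mono_meas P fun ω (h : t₀ ≤ f ω) => ?_)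
        show (0:ℝ) ≤ u (X ω)
        exact le_trans ht₀0 h
  · -- backward: threshold → optimal
    rintro ⟨t, hthr, hlow, hupp⟩ d' hd' hd'01 hd'b
    have hU0 : MeasurableSet {ω | 0 < u (X ω)} := hfm measurableSet_Ioi
    have hU0' : MeasurableSet {ω | 0 ≤ u (X ω)} := hfm measurableSet_Ici
    have hg' : Measurable fun ω => d' (X ω) := hd'.comp hX
    have hg'01 : ∀ ω, d' (X ω) ∈ Set.Icc (0:ℝ) 1 := fun ω => hd'01 (X ω)
    have coreZero : (∀ᵐ ω ∂P, (0 < u (X ω) → d (X ω) = 1) ∧ (u (X ω) < 0 → d (X ω) = 0)) →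
        ∫ ω, d' (X ω) * u (X ω) ∂P ≤ ∫ ω, d (X ω) * u (X ω) ∂P := fun hthr0 =>
      core_opt P hfm hint (le_refl 0) hg hg01 hg' hg'01 hthr0 (Or.inl rfl) hd'b
    induction t with
    | bot =>
      exfalso
      have h1 : ∀ᵐ ω ∂P, d (X ω) = 1 := hthr.mono fun ω h => h.1 (EReal.bot_lt_coe _)
      have hone : ∫ ω, d (X ω) ∂P = 1 := by
        rw [integral_congr_ae (h1.mono fun ω h => h)]
        simp
      linarith
    | coe r =>
      have hthrR : ∀ᵐ ω ∂P, (r < u (X ω) → d (X ω) = 1) ∧ (u (X ω) < r → d (X ω) = 0) :=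
        hthr.mono fun ω h => ⟨fun hlt => h.1 (EReal.coe_lt_coe_iff.2 hlt),
          fun hlt => h.2 (EReal.coe_lt_coe_iff.2 hlt)⟩
      rcases lt_trichotomy r 0 with hr | hr | hr
      · -- r < 0 : reduce to threshold at 0
        set A := {ω | r < u (X ω)} with hAdef
        have hAm : MeasurableSet A := hfm measurableSet_Ioi
        have e1 : ∫ ω in A, d (X ω) ∂P = (P A).toReal :=
          int_on_eq_one P hg hAm (hthrR.mono fun ω h hm => h.1 hm)
        have e2 := split_compl P hg hg01 hAm
        have e3 := int_on_nonneg P (A := Aᶜ) (g := fun ω => d (X ω)) hg01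
        have hsub : {ω | 0 ≤ u (X ω)} ⊆ A := fun ω (h : 0 ≤ u (X ω)) =>
          lt_of_lt_of_le hr h
        have e4 : (P {ω | 0 ≤ u (X ω)}).toReal ≤ (P A).toReal := toReal_mono_meas P hsub
        have hup2 : ∫ ω, d (X ω) ∂P ≤ (P {ω | 0 ≤ u (X ω)}).toReal :=
          le_trans hupp (min_le_right _ _)
        have hcompl0 : ∫ ω in Aᶜ, d (X ω) ∂P = 0 := by linarith
        have haeAc : ∀ᵐ ω ∂P, ω ∈ Aᶜ → d (X ω) = 0 :=
          ae_zero_of_int_zero P hg hg01 hAm.compl hcompl0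
        have hPeq : P A = P {ω | 0 ≤ u (X ω)} :=
          ((ENNReal.toReal_eq_toReal_iff' (measure_ne_top _ _) (measure_ne_top _ _)).1
            (by linarith))
        have hdiff : P (A \ {ω | 0 ≤ u (X ω)}) = 0 := by
          rw [measure_diff hsub hU0'.nullMeasurableSet (measure_ne_top _ _), hPeq,
            tsub_self]
        have haeD : ∀ᵐ ω ∂P, ω ∉ A \ {ω | 0 ≤ u (X ω)} := measure_eq_zero_iff_ae_notMem.mp hdiff
        refine coreZero ?_
        filter_upwards [hthrR, haeAc, haeD] with ω h1 h2 h3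
        constructor
        · intro hlt; exact h1.1 (lt_trans hr hlt)
        · intro hlt
          by_cases hA : ω ∈ A
          · exact absurd (Set.mem_diff_of_mem hA (fun hc => absurd hlt (not_lt.2 hc))) h3
          · exact h2 hA
      · -- r = 0
        rw [hr] at hthrR
        exact coreZero hthrR
      · -- r > 0
        by_cases hble : b ≤ (P {ω | 0 < u (X ω)}).toReal
        · have hmin : min b (P {ω | 0 < u (X ω)}).toReal = b := min_eq_left hble
          rw [hmin] at hlow
          have hdbeq : ∫ ω, d (X ω) ∂P = b := le_antisymm hfeas hlow
          exact core_opt P hfm hint hr.le hg hg01 hg' hg'01 hthrR (Or.inr hdbeq) hd'b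
        · push_neg at hble
          have hmin : min b (P {ω | 0 < u (X ω)}).toReal = (P {ω | 0 < u (X ω)}).toReal :=
            min_eq_right hble.le
          rw [hmin] at hlow
          set B := {ω | r ≤ u (X ω)} with hBdef
          have hBm : MeasurableSet B := hfm measurableSet_Ici
          have e2 := split_compl P hg hg01 hBm
          have eC : ∫ ω in Bᶜ, d (X ω) ∂P = 0 :=
            int_on_zero_of_ae P hg hBm.compl
              (hthrR.mono fun ω h hm => h.2 (not_le.1 hm))
          have e3 : ∫ ω in B, d (X ω) ∂P ≤ (P B).toReal := int_on_le P hg hg01 hBm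
          have hsub : B ⊆ {ω | 0 < u (X ω)} := fun ω (h : r ≤ u (X ω)) =>
            lt_of_lt_of_le hr h
          have e4 : (P B).toReal ≤ (P {ω | 0 < u (X ω)}).toReal := toReal_mono_meas P hsub
          have eBeq : ∫ ω in B, d (X ω) ∂P = (P B).toReal := by linarith
          have haeB : ∀ᵐ ω ∂P, ω ∈ B → d (X ω) = 1 := ae_one_of_int_eq P hg hg01 hBm eBeq
          have hPeq : P {ω | 0 < u (X ω)} = P B :=
            ((ENNReal.toReal_eq_toReal_iff' (measure_ne_top _ _) (measure_ne_top _ _)).1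
              (by linarith))
          have hdiff : P ({ω | 0 < u (X ω)} \ B) = 0 := by
            rw [measure_diff hsub hBm.nullMeasurableSet (measure_ne_top _ _), hPeq,
              tsub_self]
          have haeD : ∀ᵐ ω ∂P, ω ∉ {ω | 0 < u (X ω)} \ B := measure_eq_zero_iff_ae_notMem.mp hdiff
          refine coreZero ?_
          filter_upwards [hthrR, haeB, haeD] with ω h1 h2 h3
          constructor
          · intro hlt
            by_cases hB : ω ∈ B
            · exact h2 hB
            · exact absurd (Set.mem_diff_of_mem hlt hB) h3
          · intro hlt
            exact h1.2 (lt_trans hlt hr)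
    | top =>
      have h1 : ∀ᵐ ω ∂P, d (X ω) = 0 := hthr.mono fun ω h => h.2 (EReal.coe_lt_top _)
      have hzero : ∫ ω, d (X ω) ∂P = 0 := by
        rw [integral_congr_ae (h1.mono fun ω h => h)]
        simp
      rw [hzero] at hlow
      have hP0 : P {ω | 0 < u (X ω)} = 0 := by
        rcases min_le_iff.1 hlow with h | h
        · linarith
        · have h2 : (P {ω | 0 < u (X ω)}).toReal = 0 :=
            le_antisymm h ENNReal.toReal_nonneg
          rcases ENNReal.toReal_eq_zero_iff _ |>.1 h2 with h3 | h3
          · exact h3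
          · exact absurd h3 (measure_ne_top _ _)
      have hae0 : ∀ᵐ ω ∂P, ω ∉ {ω | 0 < u (X ω)} := measure_eq_zero_iff_ae_notMem.mp hP0
      refine coreZero ?_
      filter_upwards [h1, hae0] with ω h1ω h2ω
      exact ⟨fun hlt => absurd hlt h2ω, fun _ => h1ω⟩
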